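/- Let Γ be a finite connected girth-regular graph of valence k ≥ 3 and odd girth g = 2d+1 with signature (a_1, …, a_k) such that a_k = (k−1)^d. If uv is an edge of Γ lying on exactly a_k girth cycles, then for every i ≥ d there is no vertex w of Γ with {dist(w,u), dist(w,v)} = {i, i+1}; that is, the distance sets D^i_{i+1}(u,v) and D^{i+1}_i(u,v) are empty for all i ≥ d. -/

import Mathlib

open SimpleGraph

/-- `s` is the edge set of some cycle of length `g` in `G`. -/
def IsGirthCycleEdgeSet {V : Type*} (G : SimpleGraph V) (g : ℕ) (s : Set (Sym2 V)) : Prop :=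
  ∃ (u : V) (w : G.Walk u u), w.IsCycle ∧ w.length = g ∧ s = {e | e ∈ w.edges}

/-- The number of cycles of length `g` in `G` that contain the edge `e`. -/
noncomputable def girthCycleCount {V : Type*} (G : SimpleGraph V) (g : ℕ) (e : Sym2 V) : ℕ :=
  Set.ncard {s : Set (Sym2 V) | IsGirthCycleEdgeSet G g s ∧ e ∈ s}

/-- The multiset of the numbers of `g`-cycles through the edges incident to `v`. -/
noncomputable def vertexSignature {V : Type*} [Fintype V] (G : SimpleGraph V) (g : ℕ)
    (v : V) : Multiset ℕ :=
  ((G.neighborSet v).toFinite.toFinset.val).map fun u => girthCycleCount G g s(v, u)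

namespace Stmt12Aux

open SimpleGraph Walk

variable {V : Type*} {G : SimpleGraph V}

lemma getVert_mem_support' {x y : V} (p : G.Walk x y) {i : ℕ} (hi : i ≤ p.length) :
    p.getVert i ∈ p.support :=
  Walk.mem_support_iff_exists_getVert.mpr ⟨i, rfl, hi⟩

lemma path_getVert_inj {x y : V} {p : G.Walk x y} (hp : p.IsPath) :
    ∀ i, i ≤ p.length → ∀ j, j ≤ p.length → p.getVert i = p.getVert j → i = j := by
  induction p with
  | nil => intro i hi j hj _; simp at hi hj; omega
  | @cons a b c h q ih =>
    intro i hi j hj heq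
    rw [Walk.cons_isPath_iff] at hp
    rw [Walk.length_cons] at hi hj
    match i, j with
    | 0, 0 => rfl
    | 0, (j+1) =>
      exfalso
      rw [Walk.getVert_zero, Walk.getVert_cons_succ] at heq
      exact hp.2 (by rw [heq]; exact getVert_mem_support' q (by omega))
    | (i+1), 0 =>
      exfalso
      rw [Walk.getVert_zero, Walk.getVert_cons_succ] at heq
      exact hp.2 (by rw [← heq]; exact getVert_mem_support' q (by omega))
    | (i+1), (j+1) =>
      rw [Walk.getVert_cons_succ, Walk.getVert_cons_succ] at heq
      have := ih hp.1 i (by omega) j (by omega) heq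
      omega

lemma mem_edges_exists_index {x y a b : V} {p : G.Walk x y} (h : s(a, b) ∈ p.edges) :
    ∃ i < p.length, (p.getVert i = a ∧ p.getVert (i+1) = b) ∨
      (p.getVert i = b ∧ p.getVert (i+1) = a) := by
  induction p with
  | nil => simp at h
  | @cons u w z h' q ih =>
    rw [Walk.edges_cons, List.mem_cons] at h
    rcases h with h | h
    · refine ⟨0, by simp [Walk.length_cons], ?_⟩
      rw [Sym2.eq_iff] at h
      rcases h with ⟨rfl, rfl⟩ | ⟨rfl, rfl⟩
      · exact Or.inl ⟨by simp, by simp [Walk.getVert_cons_succ]⟩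
      · exact Or.inr ⟨by simp, by simp [Walk.getVert_cons_succ]⟩
    · obtain ⟨i, hi, hor⟩ := ih h
      refine ⟨i + 1, by rw [Walk.length_cons]; omega, ?_⟩
      simpa [Walk.getVert_cons_succ] using hor

private lemma list_aux {α : Type*} {v : α} {t : List α} (ht : t ≠ []) (hnd : t.Nodup)
    (hl : t.getLast ht = v) : ((v :: t).reverse.tail).Nodup := by
  obtain ⟨t', rfl⟩ : ∃ t', t = t' ++ [v] :=
    ⟨t.dropLast, by conv_lhs => rw [← List.dropLast_append_getLast ht, hl]⟩
  rw [List.nodup_append] at hnd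
  have h2a : t'.Nodup := hnd.1
  have h2b : v ∉ t' := fun hv => hnd.2.2 v hv v (by simp) rfl
  have hrw : ((v :: (t' ++ [v])).reverse.tail) = t'.reverse ++ [v] := by simp
  rw [hrw, List.nodup_append]
  refine ⟨by simpa using h2a, List.nodup_singleton v, ?_⟩
  intro a ha b hb hav
  rw [List.mem_singleton] at hb
  subst hb
  exact h2b (by simpa [hav] using ha)

lemma isCycle_reverse' {v : V} {c : G.Walk v v} (hc : c.IsCycle) : c.reverse.IsCycle := by
  have h3 := hc.three_le_length
  rw [Walk.isCycle_def] at hc ⊢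
  obtain ⟨ht, hnil, hnd⟩ := hc
  refine ⟨Walk.IsTrail.reverse _ ht, ?_, ?_⟩
  · intro h
    have hlen0 := congrArg Walk.length h
    rw [Walk.length_reverse] at hlen0
    simp only [Walk.length_nil] at hlen0
    omega
  · rw [Walk.support_reverse]
    have hts : c.support = v :: c.support.tail := Walk.support_eq_cons c
    have htne : c.support.tail ≠ [] := by
      intro h
      have h1 : c.support.length = c.length + 1 := Walk.length_support c
      rw [hts, h] at h1
      simp only [List.length_cons, List.length_nil] at h1
      omega
    have hlast : c.support.tail.getLast htne = v := by
      rw [List.getLast_tail]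
      exact Walk.getLast_support c
    rw [hts]
    exact list_aux htne hnd hlast

lemma cycle_getVert_ne {v : V} {c : G.Walk v v} (hc : c.IsCycle) {i : ℕ} (h0 : 0 < i)
    (hn : i < c.length) : c.getVert i ≠ v := by
  cases c with
  | nil => exact absurd hc (Walk.IsCycle.not_of_nil)
  | @cons _ b _ h q =>
    have hq : q.IsPath := ((Walk.cons_isCycle_iff q h).mp hc).1
    obtain ⟨j, rfl⟩ : ∃ j, i = j + 1 := ⟨i - 1, by omega⟩
    rw [Walk.getVert_cons_succ]
    intro hv
    rw [Walk.length_cons] at hn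
    have : j = q.length := by
      have := path_getVert_inj hq j (by omega) q.length le_rfl
        (by rw [hv, Walk.getVert_length])
      exact this
    omega

lemma exists_short_cycle {x y : V} {p q : G.Walk x y} (hp : p.IsPath) (hq : q.IsPath)
    (hne : p ≠ q) : ∃ (a : V) (c : G.Walk a a), c.IsCycle ∧ c.length ≤ p.length + q.length := by
  classical
  set s : Set (Sym2 V) := {e | e ∈ p.edges ∨ e ∈ q.edges} with hs
  set H : SimpleGraph V := SimpleGraph.fromEdgeSet s with hH
  have hsG : ∀ e ∈ s, e ∈ G.edgeSet := by
    rintro e (he | he)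
    · exact p.edges_subset_edgeSet he
    · exact q.edges_subset_edgeSet he
  have hmemH : ∀ e ∈ s, e ∈ H.edgeSet := by
    intro e he
    rw [hH, SimpleGraph.edgeSet_fromEdgeSet]
    exact ⟨he, G.not_isDiag_of_mem_edgeSet (hsG e he)⟩
  have hpH : ∀ e ∈ p.edges, e ∈ H.edgeSet := fun e he => hmemH e (Or.inl he)
  have hqH : ∀ e ∈ q.edges, e ∈ H.edgeSet := fun e he => hmemH e (Or.inr he)
  have hHG : ∀ {z w : V} (r : H.Walk z w), ∀ e ∈ r.edges, e ∈ G.edgeSet := by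
    intro z w r e he
    have := r.edges_subset_edgeSet he
    rw [hH, SimpleGraph.edgeSet_fromEdgeSet] at this
    exact hsG e this.1
  have hnacy : ¬ H.IsAcyclic := by
    intro hacy
    apply hne
    have hPQ := hacy.path_unique ⟨p.transfer H hpH, hp.transfer hpH⟩
      ⟨q.transfer H hqH, hq.transfer hqH⟩
    have h1 : (p.transfer H hpH) = (q.transfer H hqH) := congrArg Subtype.val hPQ
    have h2 := congrArg (fun r : H.Walk x y => r.transfer G (hHG r)) h1
    simpa [Walk.transfer_transfer, Walk.transfer_self] using h2
  rw [SimpleGraph.IsAcyclic] at hnacy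
  push_neg at hnacy
  obtain ⟨a, c, hc⟩ := hnacy
  refine ⟨a, c.transfer G (hHG c), hc.transfer _, ?_⟩
  rw [Walk.length_transfer]
  have hnodup : c.edges.Nodup := hc.isTrail.edges_nodup
  have hsub : c.edges ⊆ p.edges ++ q.edges := by
    intro e he
    have := c.edges_subset_edgeSet he
    rw [hH, SimpleGraph.edgeSet_fromEdgeSet] at this
    rcases this.1 with h | h
    · exact List.mem_append_left _ h
    · exact List.mem_append_right _ h
  calc c.length = c.edges.length := (Walk.length_edges c).symm
    _ = c.edges.toFinset.card := (List.toFinset_card_of_nodup hnodup).symm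
    _ ≤ (p.edges ++ q.edges).toFinset.card := by
        apply Finset.card_le_card
        intro e he
        rw [List.mem_toFinset] at he ⊢
        exact hsub he
    _ ≤ (p.edges ++ q.edges).length := List.toFinset_card_le _
    _ = p.length + q.length := by rw [List.length_append, Walk.length_edges, Walk.length_edges]

lemma unique_short_path {d : ℕ}
    (hgirth : ∀ (a : V) (c : G.Walk a a), c.IsCycle → 2 * d + 1 ≤ c.length)
    {x y : V} {p q : G.Walk x y} (hp : p.IsPath) (hq : q.IsPath)
    (hl : p.length + q.length ≤ 2 * d) : p = q := by
  by_contra hne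
  obtain ⟨a, c, hc, hlen⟩ := exists_short_cycle hp hq hne
  have := hgirth a c hc
  omega

lemma getVert_takeUntil [DecidableEq V] {x y w : V} {p : G.Walk x y} (hw : w ∈ p.support) {i : ℕ}
    (hi : i ≤ (p.takeUntil w hw).length) :
    (p.takeUntil w hw).getVert i = p.getVert i := by
  conv_rhs => rw [← Walk.take_spec p hw]
  rw [Walk.getVert_append]
  split_ifs with h
  · rfl
  · have h2 : i = (p.takeUntil w hw).length := by omega
    rw [h2, Walk.getVert_length, Nat.sub_self, Walk.getVert_zero]

lemma getVert_dropUntil [DecidableEq V] {x y w : V} {p : G.Walk x y} (hw : w ∈ p.support) (i : ℕ) :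
    (p.dropUntil w hw).getVert i = p.getVert ((p.takeUntil w hw).length + i) := by
  obtain ⟨n, hn⟩ : ∃ n, (p.takeUntil w hw).length = n := ⟨_, rfl⟩
  rw [hn]
  conv_rhs => rw [← Walk.take_spec p hw]
  rw [Walk.getVert_append, hn]
  have h1 : ¬ (n + i < n) := by omega
  rw [if_neg h1]
  congr 1
  omega

lemma takeUntil_length_eq [DecidableEq V] {x y : V} {p : G.Walk x y} (hp : p.IsPath) {j : ℕ}
    (hj : j ≤ p.length) (hmem : p.getVert j ∈ p.support) :
    (p.takeUntil (p.getVert j) hmem).length = j := by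
  have h1 : p.getVert ((p.takeUntil (p.getVert j) hmem).length) = p.getVert j := by
    rw [← getVert_takeUntil hmem le_rfl, Walk.getVert_length]
  exact path_getVert_inj hp _ (Walk.length_takeUntil_le p hmem) j hj h1

lemma edgeset_unique {d : ℕ}
    (hgirth : ∀ (a : V) (c : G.Walk a a), c.IsCycle → 2 * d + 1 ≤ c.length)
    {u v w₀ w₀' : V} {s s' : Set (Sym2 V)} (hww : w₀ = w₀')
    (h : ∃ q1 : G.Walk u w₀, ∃ q2 : G.Walk w₀ v,
      q1.IsPath ∧ q2.IsPath ∧ q1.length = d ∧ q2.length = d ∧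
      (∀ e, e ∈ s ↔ (e = s(v, u) ∨ e ∈ q1.edges ∨ e ∈ q2.edges)))
    (h' : ∃ q1 : G.Walk u w₀', ∃ q2 : G.Walk w₀' v,
      q1.IsPath ∧ q2.IsPath ∧ q1.length = d ∧ q2.length = d ∧
      (∀ e, e ∈ s' ↔ (e = s(v, u) ∨ e ∈ q1.edges ∨ e ∈ q2.edges))) : s = s' := by
  subst hww
  obtain ⟨q1, q2, h1, h2, h3, h4, h6⟩ := h
  obtain ⟨q1', q2', h1', h2', h3', h4', h6'⟩ := h'
  have e1 : q1 = q1' := unique_short_path hgirth h1 h1' (by omega)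
  have e2 : q2 = q2' := unique_short_path hgirth h2 h2' (by omega)
  ext e
  rw [h6 e, h6' e, e1, e2]

/-- The counting lemma: at most `(k-1)^j` vertices are reachable from `u` by a path of
length `j` whose second vertex is not `v`. -/
lemma countW {V : Type*} [Fintype V] {G : SimpleGraph V} [DecidableRel G.Adj] {k d : ℕ}
    (hreg : G.IsRegularOfDegree k)
    (hgirth : ∀ (a : V) (c : G.Walk a a), c.IsCycle → 2 * d + 1 ≤ c.length)
    (u v : V) (huv : G.Adj u v) :
    ∀ j, 1 ≤ j → j ≤ d →
      Set.ncard {w : V | ∃ p : G.Walk u w, p.IsPath ∧ p.length = j ∧ p.getVert 1 ≠ v}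
        ≤ (k - 1) ^ j := by
  classical
  intro j
  induction j with
  | zero => omega
  | succ j ih =>
    intro _ hjd
    rcases Nat.eq_zero_or_pos j with rfl | hj1
    · -- base case : length-1 paths
      have hsub : {w : V | ∃ p : G.Walk u w, p.IsPath ∧ p.length = 1 ∧ p.getVert 1 ≠ v}
          ⊆ ((G.neighborFinset u).erase v : Finset V) := by
        rintro w ⟨p, hp, hlen, hv⟩
        have hadj : G.Adj u w := by
          have := p.adj_getVert_succ (by omega : 0 < p.length)
          rw [Walk.getVert_zero] at this
          have hw : p.getVert 1 = w := by
            rw [← hlen, Walk.getVert_length]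
          rwa [hw] at this
        have hwv : w ≠ v := by
          intro h
          apply hv
          rw [← hlen, Walk.getVert_length]
          exact h
        exact Finset.mem_coe.mpr (Finset.mem_erase.mpr ⟨hwv, by simpa using hadj⟩)
      calc Set.ncard _ ≤ Set.ncard ((G.neighborFinset u).erase v : Set V) :=
            Set.ncard_le_ncard hsub (Set.toFinite _)
        _ = ((G.neighborFinset u).erase v).card := Set.ncard_coe_finset _
        _ = (G.neighborFinset u).card - 1 :=
            Finset.card_erase_of_mem (by simpa using huv)
        _ = k - 1 := by rw [G.card_neighborFinset_eq_degree, hreg u]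
        _ = (k - 1) ^ 1 := (pow_one _).symm
    · -- inductive step
      set Wj : Set V := {w : V | ∃ p : G.Walk u w, p.IsPath ∧ p.length = j ∧ p.getVert 1 ≠ v}
        with hWj
      have hWjfin : Wj.Finite := Set.toFinite _
      set F : Finset V := hWjfin.toFinset with hF
      have hpen : ∀ x : V, ∃ y : V, x ∈ Wj →
          ∃ p : G.Walk u x, p.IsPath ∧ p.length = j ∧ p.getVert 1 ≠ v ∧
            p.getVert (j - 1) = y := by
        intro x
        by_cases hx : x ∈ Wj
        · obtain ⟨p, h1, h2, h3⟩ := hx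
          exact ⟨p.getVert (j - 1), fun _ => ⟨p, h1, h2, h3, rfl⟩⟩
        · exact ⟨x, fun h => absurd h hx⟩
      choose pen hpen' using hpen
      have hsub : {w : V | ∃ p : G.Walk u w, p.IsPath ∧ p.length = j + 1 ∧ p.getVert 1 ≠ v}
          ⊆ ((F.biUnion fun x => (G.neighborFinset x).erase (pen x)) : Finset V) := by
        rintro w ⟨p, hp, hlen, hv⟩
        have hxs : p.getVert j ∈ p.support := getVert_mem_support' p (by omega)
        set x := p.getVert j with hx
        have hqlen : (p.takeUntil x hxs).length = j := takeUntil_length_eq hp (by omega) hxs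
        have hxW : x ∈ Wj := by
          refine ⟨p.takeUntil x hxs, hp.takeUntil hxs, hqlen, ?_⟩
          rw [getVert_takeUntil hxs (by omega)]
          exact hv
        obtain ⟨P, hP1, hP2, hP3, hP4⟩ := hpen' x hxW
        have hPq : P = p.takeUntil x hxs :=
          unique_short_path hgirth hP1 (hp.takeUntil hxs) (by omega)
        have hpenx : pen x = p.getVert (j - 1) := by
          rw [← hP4, hPq, getVert_takeUntil hxs (by omega)]
        have hadj : G.Adj x w := by
          have := p.adj_getVert_succ (by omega : j < p.length)
          have hw : p.getVert (j + 1) = w := by rw [← hlen, Walk.getVert_length]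
          rwa [hw] at this
        have hwne : w ≠ pen x := by
          rw [hpenx]
          intro h
          have hw : p.getVert (j + 1) = w := by rw [← hlen, Walk.getVert_length]
          have := path_getVert_inj hp (j + 1) (by omega) (j - 1) (by omega)
            (by rw [hw]; exact h)
          omega
        refine Finset.mem_coe.mpr (Finset.mem_biUnion.mpr
          ⟨x, ?_, Finset.mem_erase.mpr ⟨hwne, by simpa using hadj⟩⟩)
        rwa [hF, Set.Finite.mem_toFinset]
      calc Set.ncard _
          ≤ Set.ncard ((F.biUnion fun x => (G.neighborFinset x).erase (pen x)) : Set V) :=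
            Set.ncard_le_ncard hsub (Set.toFinite _)
        _ = (F.biUnion fun x => (G.neighborFinset x).erase (pen x)).card :=
            Set.ncard_coe_finset _
        _ ≤ ∑ x ∈ F, ((G.neighborFinset x).erase (pen x)).card := Finset.card_biUnion_le
        _ ≤ ∑ _x ∈ F, (k - 1) := by
            apply Finset.sum_le_sum
            intro x hxF
            have hxW : x ∈ Wj := by rwa [hF, Set.Finite.mem_toFinset] at hxF
            obtain ⟨P, hP1, hP2, hP3, hP4⟩ := hpen' x hxW
            have hadj : G.Adj (pen x) x := by
              have := P.adj_getVert_succ (by omega : j - 1 < P.length)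
              rw [(by omega : j - 1 + 1 = j)] at this
              rw [← hP4]
              rwa [(by rw [← hP2, Walk.getVert_length] : P.getVert j = x)] at this
            have hcard : ((G.neighborFinset x).erase (pen x)).card = k - 1 := by
              rw [Finset.card_erase_of_mem (by simpa using hadj.symm),
                G.card_neighborFinset_eq_degree, hreg x]
            exact le_of_eq hcard
        _ = F.card * (k - 1) := by rw [Finset.sum_const, smul_eq_mul]
        _ ≤ (k - 1) ^ j * (k - 1) := by
            apply Nat.mul_le_mul_right
            have : F.card = Wj.ncard := (Set.ncard_eq_toFinset_card Wj hWjfin).symm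
            rw [this]
            exact ih hj1 (by omega)
        _ = (k - 1) ^ (j + 1) := (pow_succ _ _).symm

/-- The key lemma: if `uv` lies on `(k-1)^d` girth cycles, then every vertex at
distance `d` from `u` is at distance at most `d` from `v`. -/
lemma key {V : Type*} [Fintype V] {G : SimpleGraph V} [DecidableRel G.Adj] {k d : ℕ}
    (hk : 3 ≤ k) (hd : 1 ≤ d) (hreg : G.IsRegularOfDegree k)
    (hgirth : ∀ (a : V) (c : G.Walk a a), c.IsCycle → 2 * d + 1 ≤ c.length)
    {u v : V} (huv : G.Adj u v)
    (hcount : girthCycleCount G (2 * d + 1) s(u, v) = (k - 1) ^ d) :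
    ∀ w : V, G.dist u w = d → G.dist w v ≤ d := by
  classical
  intro w₁ hdist
  -- get a geodesic path from u to w₁
  obtain ⟨p₀, hp₀len⟩ := SimpleGraph.exists_walk_of_dist_ne_zero (by omega : G.dist u w₁ ≠ 0)
  set p := p₀.bypass with hpdef
  have hp : p.IsPath := Walk.bypass_isPath p₀
  have hplen : p.length = d := by
    have h1 : p.length ≤ p₀.length := Walk.length_bypass_le p₀
    have h2 : G.dist u w₁ ≤ p.length := SimpleGraph.dist_le p
    omega
  by_cases hvs : v ∈ p.support
  · -- v on the geodesic: then dist w₁ v ≤ d trivially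
    have : G.dist v w₁ ≤ (p.dropUntil v hvs).length := SimpleGraph.dist_le _
    have h2 : (p.dropUntil v hvs).length ≤ p.length := Walk.length_dropUntil_le p hvs
    rw [SimpleGraph.dist_comm]
    omega
  -- v not on the geodesic: w₁ belongs to the set W below
  have hv1 : p.getVert 1 ≠ v := by
    intro h
    exact hvs (h ▸ getVert_mem_support' p (by omega))
  set A : Set (Set (Sym2 V)) :=
    {s : Set (Sym2 V) | IsGirthCycleEdgeSet G (2 * d + 1) s ∧ s(u, v) ∈ s} with hA
  set W : Set V := {w : V | ∃ p' : G.Walk u w, p'.IsPath ∧ p'.length = d ∧ p'.getVert 1 ≠ v}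
    with hW
  have hw₁W : w₁ ∈ W := ⟨p, hp, hplen, hv1⟩
  have hWcard : W.ncard ≤ (k - 1) ^ d := countW hreg hgirth u v huv d hd le_rfl
  have hAcard : A.ncard = (k - 1) ^ d := hcount
  -- Step 2: from each girth cycle through uv extract its midpoint
  have step2 : ∀ s ∈ A, ∃ w₀ : V, ∃ q1 : G.Walk u w₀, ∃ q2 : G.Walk w₀ v,
      q1.IsPath ∧ q2.IsPath ∧ q1.length = d ∧ q2.length = d ∧ q1.getVert 1 ≠ v ∧
      (∀ e, e ∈ s ↔ (e = s(v, u) ∨ e ∈ q1.edges ∨ e ∈ q2.edges)) := by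
    rintro s ⟨⟨x, c, hcyc, hclen, hcs⟩, hes⟩
    have hes' : s(u, v) ∈ c.edges := by rwa [hcs] at hes
    have hvsup : v ∈ c.support := Walk.snd_mem_support_of_mem_edges c hes'
    -- rotate so the cycle starts at v
    set c₁ := c.rotate v hvsup with hc₁
    have hc₁cyc : c₁.IsCycle := hcyc.rotate hvsup
    have hc₁len : c₁.length = 2 * d + 1 := by
      have h1 := congrArg Walk.length (Walk.take_spec c hvsup)
      rw [Walk.length_append] at h1
      have h2 : c₁.length = (c.dropUntil v hvsup).length + (c.takeUntil v hvsup).length :=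
        Walk.length_append _ _
      omega
    have hc₁edges : ∀ e, e ∈ c₁.edges ↔ e ∈ c.edges := fun e =>
      (Walk.rotate_edges c v hvsup).mem_iff
    have hes₁ : s(u, v) ∈ c₁.edges := (hc₁edges _).mpr hes'
    -- find a representative cycle c₂ starting at v whose second vertex is u
    have main : ∃ c₂ : G.Walk v v, c₂.IsCycle ∧ c₂.length = 2 * d + 1 ∧
        c₂.getVert 1 = u ∧ (∀ e, e ∈ c₂.edges ↔ e ∈ c.edges) := by
      obtain ⟨i, hi, hor⟩ := mem_edges_exists_index hes₁
      rcases hor with ⟨hiu, hiv⟩ | ⟨hiv, hiu⟩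
      · -- getVert i = u, getVert (i+1) = v : edge at the end, reverse the cycle
        have hieq : i + 1 = c₁.length := by
          by_contra hne
          exact cycle_getVert_ne hc₁cyc (by omega) (by omega) hiv
        refine ⟨c₁.reverse, isCycle_reverse' hc₁cyc, by rw [Walk.length_reverse]; omega, ?_, ?_⟩
        · rw [Walk.getVert_reverse]
          rw [(by omega : c₁.length - 1 = i)]
          exact hiu
        · intro e
          rw [Walk.edges_reverse, List.mem_reverse]
          exact hc₁edges e
      · -- getVert i = v : i = 0, so second vertex is u
        have hieq : i = 0 := by
          by_contra hne
          exact cycle_getVert_ne hc₁cyc (by omega) (by omega) hiv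
        subst hieq
        exact ⟨c₁, hc₁cyc, hc₁len, by simpa using hiu, hc₁edges⟩
    obtain ⟨c₂, hc₂cyc, hc₂len, hc₂gv, hc₂edges⟩ := main
    -- destructure c₂ = cons h p₂
    cases c₂ with
    | nil => exact absurd hc₂cyc Walk.IsCycle.not_of_nil
    | @cons _ b _ hvb p₂ =>
      have hbu : b = u := by
        have : (Walk.cons hvb p₂).getVert 1 = p₂.getVert 0 := Walk.getVert_cons_succ p₂ hvb
        rw [Walk.getVert_zero] at this
        rw [this] at hc₂gv
        exact hc₂gv
      subst hbu
      have hp₂ : p₂.IsPath := ((Walk.cons_isCycle_iff p₂ hvb).mp hc₂cyc).1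
      have hp₂len : p₂.length = 2 * d := by
        have := hc₂len
        rw [Walk.length_cons] at this
        omega
      -- midpoint
      have hw₀mem : p₂.getVert d ∈ p₂.support := getVert_mem_support' p₂ (by omega)
      have hq1len : (p₂.takeUntil (p₂.getVert d) hw₀mem).length = d :=
        takeUntil_length_eq hp₂ (by omega) hw₀mem
      have hspec := Walk.take_spec p₂ hw₀mem
      have hq2len : (p₂.dropUntil (p₂.getVert d) hw₀mem).length = d := by
        have h1 := congrArg Walk.length hspec
        rw [Walk.length_append] at h1
        omega
      have hq1path := hp₂.takeUntil hw₀mem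
      have hq2path := hp₂.dropUntil hw₀mem
      have hq1gv : (p₂.takeUntil (p₂.getVert d) hw₀mem).getVert 1 ≠ v := by
        rw [getVert_takeUntil hw₀mem (by omega)]
        intro h
        have h2 := path_getVert_inj hp₂ 1 (by omega) p₂.length le_rfl
          (by rw [h, Walk.getVert_length])
        omega
      have hsplit : ∀ e, e ∈ p₂.edges ↔
          (e ∈ (p₂.takeUntil (p₂.getVert d) hw₀mem).edges ∨
           e ∈ (p₂.dropUntil (p₂.getVert d) hw₀mem).edges) := by
        intro e
        conv_lhs => rw [← hspec]
        rw [Walk.edges_append, List.mem_append]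
      refine ⟨p₂.getVert d, p₂.takeUntil _ hw₀mem, p₂.dropUntil _ hw₀mem,
        hq1path, hq2path, hq1len, hq2len, hq1gv, ?_⟩
      intro e
      rw [hcs]
      have hmem : e ∈ c.edges ↔ e ∈ (Walk.cons hvb p₂).edges := (hc₂edges e).symm
      rw [Set.mem_setOf_eq, hmem, Walk.edges_cons, List.mem_cons, hsplit e]
  -- choose the midpoint function
  have step2' : ∀ s : Set (Sym2 V), ∃ w₀ : V, s ∈ A →
      (w₀ ∈ W ∧ G.dist w₀ v ≤ d ∧ ∃ q1 : G.Walk u w₀, ∃ q2 : G.Walk w₀ v,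
        q1.IsPath ∧ q2.IsPath ∧ q1.length = d ∧ q2.length = d ∧
        (∀ e, e ∈ s ↔ (e = s(v, u) ∨ e ∈ q1.edges ∨ e ∈ q2.edges))) := by
    intro s
    by_cases hsA : s ∈ A
    · obtain ⟨w₀, q1, q2, h1, h2, h3, h4, h5, h6⟩ := step2 s hsA
      refine ⟨w₀, fun _ => ⟨⟨q1, h1, h3, h5⟩, ?_, q1, q2, h1, h2, h3, h4, h6⟩⟩
      have := SimpleGraph.dist_le q2
      omega
    · exact ⟨u, fun h => absurd h hsA⟩
  choose f hf using step2'
  have hinj : Set.InjOn f A := fun s hs s' hs' heq =>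
    edgeset_unique hgirth heq (hf s hs).2.2 (hf s' hs').2.2
  have himg : f '' A ⊆ W := by
    rintro w' ⟨s, hs, rfl⟩
    exact (hf s hs).1
  have hWfin : W.Finite := Set.toFinite _
  have heq : f '' A = W := by
    apply Set.eq_of_subset_of_ncard_le himg _ hWfin
    rw [Set.ncard_image_of_injOn hinj, hAcard]
    exact hWcard
  rw [← heq] at hw₁W
  obtain ⟨s, hs, hfs⟩ := hw₁W
  have := (hf s hs).2.1
  rw [hfs] at this
  exact this

end Stmt12Aux

/-- **Lemma 7.** In a finite connected girth-regular graph of valence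
`k ≥ 3`, odd girth `g = 2d+1` and signature `(a 0, …, a (k-1))` with
`a (k-1) = (k-1)^d`, if `uv` is an edge lying on exactly `a (k-1)` girth cycles, then
for every `i ≥ d` there is no vertex at distance `i` from `u` and `i+1` from `v`, nor
one at distance `i+1` from `u` and `i` from `v`. -/
theorem stmt12 {V : Type*} [Fintype V] (G : SimpleGraph V) [DecidableRel G.Adj]
    (k d : ℕ) (hk : 3 ≤ k) (hconn : G.Connected)
    (hreg : G.IsRegularOfDegree k) (hg : G.egirth = ((2 * d + 1 : ℕ) : ℕ∞))
    (a : Fin k → ℕ) (hmono : Monotone a)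
    (hsig : ∀ v : V, vertexSignature G (2 * d + 1) v = Multiset.map a Finset.univ.val)
    (hak : a ⟨k - 1, by omega⟩ = (k - 1) ^ d)
    (u v : V) (huv : G.Adj u v)
    (he : girthCycleCount G (2 * d + 1) s(u, v) = a ⟨k - 1, by omega⟩) :
    ∀ i, d ≤ i → ∀ w : V,
      ¬(G.dist w u = i ∧ G.dist w v = i + 1) ∧ ¬(G.dist w u = i + 1 ∧ G.dist w v = i) := by
  classical
  have hgirth : ∀ (x : V) (c : G.Walk x x), c.IsCycle → 2 * d + 1 ≤ c.length := by
    intro x c hc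
    have h1 : ((2 * d + 1 : ℕ) : ℕ∞) ≤ G.egirth := le_of_eq hg.symm
    rw [SimpleGraph.le_egirth] at h1
    exact_mod_cast h1 x c hc
  have hd : 1 ≤ d := by
    have h3 := G.three_le_egirth
    rw [hg] at h3
    have : (3 : ℕ) ≤ 2 * d + 1 := by exact_mod_cast h3
    omega
  have hcount : girthCycleCount G (2 * d + 1) s(u, v) = (k - 1) ^ d := he.trans hak
  have hcount' : girthCycleCount G (2 * d + 1) s(v, u) = (k - 1) ^ d := by
    rw [Sym2.eq_swap]
    exact hcount
  have key1 : ∀ w : V, G.dist u w = d → G.dist w v ≤ d :=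
    Stmt12Aux.key hk hd hreg hgirth huv hcount
  have key2 : ∀ w : V, G.dist v w = d → G.dist w u ≤ d :=
    Stmt12Aux.key hk hd hreg hgirth huv.symm hcount'
  have hdistuv : G.dist u v ≤ 1 := by
    have := SimpleGraph.dist_le (Walk.cons huv (Walk.nil : G.Walk v v))
    simpa using this
  have hdistvu : G.dist v u ≤ 1 := by rw [SimpleGraph.dist_comm]; exact hdistuv
  intro i hi
  induction i, hi using Nat.le_induction with
  | base =>
    intro w
    constructor
    · rintro ⟨h1, h2⟩
      have : G.dist w v ≤ d := key1 w (by rw [SimpleGraph.dist_comm]; exact h1)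
      omega
    · rintro ⟨h1, h2⟩
      have : G.dist w u ≤ d := key2 w (by rw [SimpleGraph.dist_comm]; exact h2)
      omega
  | succ i hi ih =>
    intro w
    constructor
    · rintro ⟨h1, h2⟩
      obtain ⟨p, hplen⟩ := SimpleGraph.exists_walk_of_dist_ne_zero
        (by omega : G.dist w u ≠ 0)
      rw [h1] at hplen
      cases p with
      | nil => simp at hplen
      | @cons _ x _ hadj q =>
        rw [Walk.length_cons] at hplen
        have hxu : G.dist x u = i := by
          have hle : G.dist x u ≤ i := by
            have := SimpleGraph.dist_le q
            omega
          have hwx : G.dist w x ≤ 1 := by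
            have := SimpleGraph.dist_le (Walk.cons hadj (Walk.nil : G.Walk x x))
            simpa using this
          have := hconn.dist_triangle (u := w) (v := x) (w := u)
          omega
        have hxv : G.dist x v = i + 1 := by
          have hle : G.dist x v ≤ i + 1 := by
            have := hconn.dist_triangle (u := x) (v := u) (w := v)
            omega
          have hwx : G.dist w x ≤ 1 := by
            have := SimpleGraph.dist_le (Walk.cons hadj (Walk.nil : G.Walk x x))
            simpa using this
          have := hconn.dist_triangle (u := w) (v := x) (w := v)
          omega
        exact (ih x).1 ⟨hxu, hxv⟩
    · rintro ⟨h1, h2⟩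
      obtain ⟨p, hplen⟩ := SimpleGraph.exists_walk_of_dist_ne_zero
        (by omega : G.dist w v ≠ 0)
      rw [h2] at hplen
      cases p with
      | nil => simp at hplen
      | @cons _ x _ hadj q =>
        rw [Walk.length_cons] at hplen
        have hwx : G.dist w x ≤ 1 := by
          have := SimpleGraph.dist_le (Walk.cons hadj (Walk.nil : G.Walk x x))
          simpa using this
        have hxv : G.dist x v = i := by
          have hle : G.dist x v ≤ i := by
            have := SimpleGraph.dist_le q
            omega
          have := hconn.dist_triangle (u := w) (v := x) (w := v)
          omega
        have hxu : G.dist x u = i + 1 := by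
          have hle : G.dist x u ≤ i + 1 := by
            have := hconn.dist_triangle (u := x) (v := v) (w := u)
            omega
          have := hconn.dist_triangle (u := w) (v := x) (w := u)
          omega
        exact (ih x).2 ⟨hxu, hxv⟩
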